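/- Let n ≥ 1, let δ ∈ (0,1) and let A ⊆ ℝⁿ be a set such that the Minkowski sum A + B(0,δ) is contained in some closed ball of radius 1 (i.e. has out-radius at most 1). Then, with η(δ) = √(2δ − δ²), one has the inclusions (A + B(0,δ))^c ⊆ A^c ⊆ (A + B(0,δ))^c + B(0, η(δ)). -/

import Mathlib

open Metric Set Pointwise

noncomputable section

/-- The `c`-dual of a set `A ⊆ ℝⁿ`. -/
def cDual {n : ℕ} (A : Set (EuclideanSpace ℝ (Fin n))) : Set (EuclideanSpace ℝ (Fin n)) :=
  {y | ∀ x ∈ A, ‖x - y‖ ≤ 1}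

set_option maxHeartbeats 1000000 in
/-- Quantitative continuity of the `c`-duality: if `A + B(0,δ)` has out-radius at most `1`,
then `(A + δB)^c ⊆ A^c ⊆ (A + δB)^c + η(δ)B` where `η(δ) = √(2δ - δ²)`. -/
theorem stmt9 (n : ℕ) (hn : 1 ≤ n) (δ : ℝ) (hδ : δ ∈ Set.Ioo (0 : ℝ) 1)
    (A : Set (EuclideanSpace ℝ (Fin n)))
    (hout : ∃ x : EuclideanSpace ℝ (Fin n),
      A + closedBall (0 : EuclideanSpace ℝ (Fin n)) δ ⊆ closedBall x 1) :
    cDual (A + closedBall (0 : EuclideanSpace ℝ (Fin n)) δ) ⊆ cDual A ∧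
      cDual A ⊆ cDual (A + closedBall (0 : EuclideanSpace ℝ (Fin n)) δ) +
        closedBall (0 : EuclideanSpace ℝ (Fin n)) (Real.sqrt (2 * δ - δ ^ 2)) := by
  obtain ⟨hδ0, hδ1⟩ := hδ
  set η := Real.sqrt (2 * δ - δ ^ 2) with hηdef
  clear_value η
  have hηsq : η ^ 2 = 2 * δ - δ ^ 2 := by
    rw [hηdef]; exact Real.sq_sqrt (by nlinarith)
  have hη0 : 0 ≤ η := by rw [hηdef]; exact Real.sqrt_nonneg _
  have hηpos : 0 < η := by rw [hηdef]; exact Real.sqrt_pos.mpr (by nlinarith)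
  constructor
  · intro y hy x hxA
    exact hy x (Set.mem_add.mpr ⟨x, hxA, 0, by simpa using hδ0.le, add_zero x⟩)
  · intro y hy
    rcases A.eq_empty_or_nonempty with hA | hA
    · refine Set.mem_add.mpr ⟨y, ?_, 0, by simpa using hη0, add_zero y⟩
      intro w hw
      rw [hA] at hw
      simp at hw
    · obtain ⟨x₀, hx₀⟩ := hout
      have hAy : ∀ a ∈ A, ‖a - y‖ ≤ 1 := fun a ha => hy a ha
      have hAx₀ : ∀ a ∈ A, ‖a - x₀‖ ≤ 1 - δ := by
        intro a ha
        by_cases h : a = x₀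
        · simp [h]; linarith
        · have hne : a - x₀ ≠ 0 := sub_ne_zero.mpr h
          have hc : 0 < ‖a - x₀‖ := norm_pos_iff.mpr hne
          set u := (δ / ‖a - x₀‖) • (a - x₀) with hu_def
          have hu : ‖u‖ = δ := by
            rw [hu_def, norm_smul, Real.norm_eq_abs, abs_of_pos (div_pos hδ0 hc)]
            field_simp
          have hmem : a + u ∈ closedBall x₀ 1 := by
            refine hx₀ (Set.mem_add.mpr ⟨a, ha, u, ?_, rfl⟩)
            simp [mem_closedBall, dist_zero_right, hu]
          have h1 : ‖a + u - x₀‖ ≤ 1 := by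
            simpa [mem_closedBall, dist_eq_norm] using hmem
          have hrw : a + u - x₀ = (1 + δ / ‖a - x₀‖) • (a - x₀) := by
            rw [hu_def]; module
          rw [hrw, norm_smul, Real.norm_eq_abs,
            abs_of_pos (by positivity : (0:ℝ) < 1 + δ / ‖a - x₀‖)] at h1
          have : ‖a - x₀‖ + δ ≤ 1 := by
            have : (1 + δ / ‖a - x₀‖) * ‖a - x₀‖ = ‖a - x₀‖ + δ := by
              field_simp
            linarith [this ▸ h1]
          linarith
      have key : ∃ z : EuclideanSpace ℝ (Fin n),
          ‖y - z‖ ≤ η ∧ ∀ a ∈ A, ‖a - z‖ ≤ 1 - δ := by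
        set d := ‖x₀ - y‖ with hd_def
        clear_value d
        by_cases hdη : d ≤ η
        · exact ⟨x₀, by rw [norm_sub_rev, ← hd_def]; exact hdη, hAx₀⟩
        · push_neg at hdη
          have hd0 : 0 < d := lt_trans hηpos hdη
          set lam := (2 * δ - δ ^ 2) / d ^ 2 with hlam_def
          clear_value lam
          have hlam0 : 0 ≤ lam := by
            rw [hlam_def]; exact div_nonneg (by nlinarith) (by positivity)
          have hlamd : lam * d ^ 2 = 2 * δ - δ ^ 2 := by
            rw [hlam_def]; field_simp
          have hlam1 : lam ≤ 1 := by
            rw [hlam_def, div_le_one (by positivity)]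
            nlinarith
          refine ⟨y + lam • (x₀ - y), ?_, ?_⟩
          · have : y - (y + lam • (x₀ - y)) = (-lam) • (x₀ - y) := by module
            rw [this, norm_smul, Real.norm_eq_abs, abs_neg, abs_of_nonneg hlam0, ← hd_def]
            rw [show lam * d = η ^ 2 / d by rw [hlam_def, ← hηsq]; field_simp]
            rw [div_le_iff₀ hd0]
            nlinarith
          · intro a ha
            have hu := hAy a ha
            have hv := hAx₀ a ha
            have hid : a - (y + lam • (x₀ - y)) =
                (1 - lam) • (a - y) + lam • (a - x₀) := by module
            have hip : ‖(a - y) - (a - x₀)‖ ^ 2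
                = ‖a - y‖ ^ 2 - 2 * inner ℝ (a - y) (a - x₀) + ‖a - x₀‖ ^ 2 :=
              @norm_sub_sq_real (EuclideanSpace ℝ (Fin n)) _ _ _ _
            have hd2 : (a - y) - (a - x₀) = x₀ - y := by module
            rw [hd2] at hip
            have hsq : ‖a - (y + lam • (x₀ - y))‖ ^ 2
                = (1 - lam) ^ 2 * ‖a - y‖ ^ 2
                  + 2 * ((1 - lam) * lam) * inner ℝ (a - y) (a - x₀)
                  + lam ^ 2 * ‖a - x₀‖ ^ 2 := by
              rw [hid, @norm_add_sq_real (EuclideanSpace ℝ (Fin n)) _ _ _ _,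
                real_inner_smul_left, real_inner_smul_right, norm_smul, norm_smul,
                Real.norm_eq_abs, Real.norm_eq_abs,
                abs_of_nonneg (by linarith : (0:ℝ) ≤ 1 - lam), abs_of_nonneg hlam0]
              ring
            have heq : ‖a - (y + lam • (x₀ - y))‖ ^ 2
                = (1 - lam) * ‖a - y‖ ^ 2 + lam * ‖a - x₀‖ ^ 2
                  - lam * (1 - lam) * ‖x₀ - y‖ ^ 2 := by
              linear_combination hsq + lam * (1 - lam) * hip
            have h5 : lam * (1 - lam) * d ^ 2 = (1 - lam) * (2 * δ - δ ^ 2) := by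
              linear_combination (1 - lam) * hlamd
            have h6 : (1 - lam) * ‖a - y‖ ^ 2 ≤ (1 - lam) * 1 :=
              mul_le_mul_of_nonneg_left (by nlinarith [norm_nonneg (a - y)]) (by linarith)
            have h7 : lam * ‖a - x₀‖ ^ 2 ≤ lam * (1 - δ) ^ 2 :=
              mul_le_mul_of_nonneg_left (by nlinarith [norm_nonneg (a - x₀)]) hlam0
            have hbd : ‖a - (y + lam • (x₀ - y))‖ ^ 2 ≤ (1 - δ) ^ 2 := by
              rw [heq, ← hd_def]
              nlinarith [h5, h6, h7]
            have hnn : (0:ℝ) ≤ 1 - δ := by linarith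
            nlinarith [norm_nonneg (a - (y + lam • (x₀ - y))), hbd, hnn]
      obtain ⟨z, hz1, hz2⟩ := key
      refine Set.mem_add.mpr ⟨z, ?_, y - z, by
        simpa [mem_closedBall, dist_zero_right] using hz1, by abel⟩
      intro w hw
      obtain ⟨a, ha, b, hb, rfl⟩ := Set.mem_add.mp hw
      have hb' : ‖b‖ ≤ δ := by simpa [mem_closedBall, dist_zero_right] using hb
      have : a + b - z = (a - z) + b := by abel
      rw [this]
      calc ‖(a - z) + b‖ ≤ ‖a - z‖ + ‖b‖ := norm_add_le _ _
        _ ≤ (1 - δ) + δ := add_le_add (hz2 a ha) hb'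
        _ = 1 := by ring
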